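/- Let J be a nonempty finite index set and let a > 0, b > 0, W > 0, and r_j > 0, c_j > 0 for each j ∈ J. For the power-cost function g(p) = Σ_{j∈J} r_j·(a·p + b)/(W·log₂(1 + c_j·p)), there exists δ > 0 such that g is strictly decreasing on (0, δ), and there exists P > 0 such that g is strictly increasing on (P, ∞). -/

import Mathlib

open Real Set

/-- the power-cost function
`g(p) = Σ_{j∈J} r_j·(a·p + b)/(W·log₂(1 + c_j·p))` is strictly decreasing on some
interval `(0, δ)` and strictly increasing on some interval `(P, ∞)`. -/
theorem stmt_5 {J : Type*} [Fintype J] [Nonempty J]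
    (a b W : ℝ) (r c : J → ℝ)
    (ha : 0 < a) (hb : 0 < b) (hW : 0 < W)
    (hr : ∀ j, 0 < r j) (hc : ∀ j, 0 < c j) :
    (∃ δ : ℝ, 0 < δ ∧
      StrictAntiOn (fun p : ℝ => ∑ j, r j * (a * p + b) / (W * Real.logb 2 (1 + c j * p)))
        (Set.Ioo 0 δ)) ∧
    (∃ P : ℝ, 0 < P ∧
      StrictMonoOn (fun p : ℝ => ∑ j, r j * (a * p + b) / (W * Real.logb 2 (1 + c j * p)))
        (Set.Ioi P)) := by
  classical
  have hlog2 : (0:ℝ) < Real.log 2 := Real.log_pos (by norm_num)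
  set N : J → ℝ → ℝ := fun j p => a * Real.log (1 + c j * p) - c j * (a * p + b) / (1 + c j * p)
    with hNdef
  set K : J → ℝ → ℝ := fun j p =>
    (r j * W / Real.log 2) * N j p / (W * Real.logb 2 (1 + c j * p))^2 with hKdef
  -- derivative of each summand
  have hderiv : ∀ (j : J) (p : ℝ), 0 < p →
      HasDerivAt (fun p : ℝ => r j * (a * p + b) / (W * Real.logb 2 (1 + c j * p))) (K j p) p := by
    intro j p hp
    have h1 : (0:ℝ) < 1 + c j * p := by nlinarith [hc j]
    have hlogpos : 0 < Real.log (1 + c j * p) := Real.log_pos (by nlinarith [hc j])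
    have hinner : HasDerivAt (fun p : ℝ => 1 + c j * p) (c j) p := by
      simpa using ((hasDerivAt_id p).const_mul (c j)).const_add 1
    have hlog : HasDerivAt (fun p : ℝ => Real.log (1 + c j * p)) (c j / (1 + c j * p)) p := by
      simpa [div_eq_inv_mul, Function.comp_def] using (Real.hasDerivAt_log (ne_of_gt h1)).comp p hinner
    have hv : HasDerivAt (fun p : ℝ => W * Real.logb 2 (1 + c j * p))
        (W * (c j / ((1 + c j * p) * Real.log 2))) p := by
      have := (hlog.div_const (Real.log 2)).const_mul W
      simpa [Real.logb, div_div] using this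
    have hu : HasDerivAt (fun p : ℝ => r j * (a * p + b)) (r j * a) p := by
      simpa using (((hasDerivAt_id p).const_mul a).add_const b).const_mul (r j)
    have hvne : W * Real.logb 2 (1 + c j * p) ≠ 0 := by
      have h2 : 0 < Real.logb 2 (1 + c j * p) :=
        Real.logb_pos (by norm_num) (by nlinarith [hc j])
      exact ne_of_gt (mul_pos hW h2)
    have h := hu.fun_div hv hvne
    refine h.congr_deriv ?_
    simp only [hKdef, hNdef, Real.logb]
    field_simp
  -- sign of K
  have hVpos : ∀ (j : J) (p : ℝ), 0 < p → 0 < W * Real.logb 2 (1 + c j * p) := by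
    intro j p hp
    exact mul_pos hW (Real.logb_pos (by norm_num) (by nlinarith [hc j]))
  have hKneg : ∀ (j : J) (p : ℝ), 0 < p → N j p < 0 → K j p < 0 := by
    intro j p hp hN
    have hV := hVpos j p hp
    exact div_neg_of_neg_of_pos
      (mul_neg_of_pos_of_neg (div_pos (mul_pos (hr j) hW) hlog2) hN) (pow_pos hV 2)
  have hKpos : ∀ (j : J) (p : ℝ), 0 < p → 0 < N j p → 0 < K j p := by
    intro j p hp hN
    have hV := hVpos j p hp
    exact div_pos (mul_pos (div_pos (mul_pos (hr j) hW) hlog2) hN) (pow_pos hV 2)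
  -- small-p negativity of N
  have hδj : ∀ j : J, ∃ δ > 0, ∀ p : ℝ, 0 < p → p < δ → N j p < 0 := by
    intro j
    have hcont : ContinuousAt (N j) 0 := by
      have h1 : ContinuousAt (fun p : ℝ => Real.log (1 + c j * p)) 0 :=
        ContinuousAt.log (by fun_prop) (by norm_num)
      have h2 : ContinuousAt (fun p : ℝ => c j * (a * p + b) / (1 + c j * p)) 0 := by
        apply ContinuousAt.div (by fun_prop) (by fun_prop)
        norm_num
      exact ((h1.const_mul a).sub h2)
    have h0 : N j 0 < 0 := by
      simp only [hNdef, mul_zero, add_zero, zero_add, Real.log_one, div_one]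
      nlinarith [hc j]
    have hev : ∀ᶠ p in nhds (0:ℝ), N j p < 0 :=
      hcont.eventually_lt continuousAt_const h0
    rcases Metric.eventually_nhds_iff.mp hev with ⟨ε, hε, hball⟩
    refine ⟨ε, hε, fun p hp hpε => hball ?_⟩
    simp [Real.dist_eq, abs_of_pos hp, hpε]
  -- large-p positivity of N
  have hPj : ∀ j : J, ∃ P > 0, ∀ p : ℝ, P < p → 0 < N j p := by
    intro j
    set Kc : ℝ := (a + b * c j) / a with hKc
    have hcj := hc j
    have hKcpos : 0 < Kc := div_pos (by nlinarith) ha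
    have hexp1 := Real.add_one_le_exp Kc
    have hP0 : 0 < (Real.exp Kc - 1) / c j := div_pos (by linarith) hcj
    refine ⟨(Real.exp Kc - 1) / c j, hP0, fun p hp => ?_⟩
    have hp0 : 0 < p := lt_trans hP0 hp
    have h1 : (0:ℝ) < 1 + c j * p := by nlinarith [hc j]
    have hexp : Real.exp Kc < 1 + c j * p := by
      have := (div_lt_iff₀ (hc j)).mp hp
      nlinarith
    have hlogK : Kc < Real.log (1 + c j * p) :=
      (Real.lt_log_iff_exp_lt h1).mpr hexp
    have hterm2 : c j * (a * p + b) / (1 + c j * p) ≤ a + b * c j := by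
      rw [div_le_iff₀ h1]
      nlinarith [mul_nonneg (mul_nonneg hb.le (mul_nonneg hcj.le hcj.le)) hp0.le]
    have : a + b * c j < a * Real.log (1 + c j * p) := by
      have := mul_lt_mul_of_pos_left hlogK ha
      rw [hKc] at this
      calc a + b * c j = a * ((a + b * c j) / a) := by field_simp
        _ < a * Real.log (1 + c j * p) := this
    simp only [hNdef]
    linarith
  choose δf hδfpos hδfN using hδj
  choose Pf hPfpos hPfN using hPj
  constructor
  · refine ⟨Finset.univ.inf' Finset.univ_nonempty δf, ?_, ?_⟩
    · exact (Finset.lt_inf'_iff _).mpr fun j _ => hδfpos j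
    · apply strictAntiOn_of_deriv_neg (convex_Ioo _ _)
      · intro p hp
        exact (HasDerivAt.fun_sum fun j _ => hderiv j p hp.1).continuousAt.continuousWithinAt
      · intro p hp
        rw [interior_Ioo] at hp
        rw [(HasDerivAt.fun_sum fun j _ => hderiv j p hp.1).deriv]
        refine Finset.sum_neg (fun j _ => hKneg j p hp.1 ?_) Finset.univ_nonempty
        exact hδfN j p hp.1 (lt_of_lt_of_le hp.2 (Finset.inf'_le _ (Finset.mem_univ j)))
  · refine ⟨Finset.univ.sup' Finset.univ_nonempty Pf, ?_, ?_⟩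
    · obtain ⟨j⟩ := ‹Nonempty J›
      exact lt_of_lt_of_le (hPfpos j) (Finset.le_sup' _ (Finset.mem_univ j))
    · have hPpos : 0 < Finset.univ.sup' Finset.univ_nonempty Pf := by
        obtain ⟨j⟩ := ‹Nonempty J›
        exact lt_of_lt_of_le (hPfpos j) (Finset.le_sup' _ (Finset.mem_univ j))
      apply strictMonoOn_of_deriv_pos (convex_Ioi _)
      · intro p hp
        have hp0 : 0 < p := lt_trans hPpos hp
        exact (HasDerivAt.fun_sum fun j _ => hderiv j p hp0).continuousAt.continuousWithinAt
      · intro p hp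
        rw [interior_Ioi] at hp
        have hp0 : 0 < p := lt_trans hPpos hp
        rw [(HasDerivAt.fun_sum fun j _ => hderiv j p hp0).deriv]
        refine Finset.sum_pos (fun j _ => hKpos j p hp0 ?_) Finset.univ_nonempty
        exact hPfN j p (lt_of_le_of_lt (Finset.le_sup' _ (Finset.mem_univ j)) hp)
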